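/- Let A be an object of a braided monoidal category C and let t₁, t₂ : A ⊗ A ⟶ A ⊗ A and e : A ⟶ I satisfy (t₂ ⊗ 1_A) ≫ (1_A ⊗ t₁) = (1_A ⊗ t₁) ≫ (t₂ ⊗ 1_A) and t₁ ≫ (e ⊗ 1_A) = t₂ ≫ (1_A ⊗ e), and assume the common composite m := t₁ ≫ (e ⊗ 1_A) ≫ λ_A is non-degenerate. Then the following are equivalent: (i) t₁ ≫ (1_A ⊗ e) = 1_A ⊗ e; (ii) t₂ ≫ (e ⊗ 1_A) = e ⊗ 1_A; (iii) m ≫ e = (e ⊗ e) ≫ λ_I. -/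

import Mathlib

open CategoryTheory Category MonoidalCategory

universe v u

variable {C : Type u} [Category.{v} C] [MonoidalCategory C] [BraidedCategory C]

/-- The fusion equation for `t : A ⊗ A ⟶ A ⊗ A` in a braided monoidal category
(domain `A ⊗ (A ⊗ A)`). -/
def FusionEq (A : C) (t : A ⊗ A ⟶ A ⊗ A) : Prop :=
  (A ◁ t) ≫ (α_ A A A).inv ≫ ((β_ A A).hom ▷ A) ≫ (α_ A A A).hom ≫ (A ◁ t) ≫
      (α_ A A A).inv ≫ ((β_ A A).inv ▷ A) ≫ (t ▷ A) ≫ (α_ A A A).hom =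
    (α_ A A A).inv ≫ (t ▷ A) ≫ (α_ A A A).hom ≫ (A ◁ t)

/-- The fusion equation in the reverse monoidal category `C^rev`, expressed in `C`
(domain `(A ⊗ A) ⊗ A`). -/
def RevFusionEq (A : C) (t : A ⊗ A ⟶ A ⊗ A) : Prop :=
  (t ▷ A) ≫ (α_ A A A).hom ≫ (A ◁ (β_ A A).hom) ≫ (α_ A A A).inv ≫ (t ▷ A) ≫
      (α_ A A A).hom ≫ (A ◁ (β_ A A).inv) ≫ (A ◁ t) ≫ (α_ A A A).inv =
    (α_ A A A).hom ≫ (A ◁ t) ≫ (α_ A A A).inv ≫ (t ▷ A)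

/-- The compatibility `(t₂ ⊗ 1) ≫ (1 ⊗ t₁) = (1 ⊗ t₁) ≫ (t₂ ⊗ 1)`. -/
def CompatEq (A : C) (t₁ t₂ : A ⊗ A ⟶ A ⊗ A) : Prop :=
  (t₂ ▷ A) ≫ (α_ A A A).hom ≫ (A ◁ t₁) ≫ (α_ A A A).inv =
    (α_ A A A).hom ≫ (A ◁ t₁) ≫ (α_ A A A).inv ≫ (t₂ ▷ A)

/-- A morphism `m : A ⊗ A ⟶ A` is non-degenerate if tensoring hom-sets with it on
either side is injective. -/
def NonDeg (A : C) (m : A ⊗ A ⟶ A) : Prop :=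
  (∀ (X Y : C) (f g : X ⟶ Y ⊗ A),
      (f ▷ A) ≫ (α_ Y A A).hom ≫ (Y ◁ m) = (g ▷ A) ≫ (α_ Y A A).hom ≫ (Y ◁ m) →
      f = g) ∧
  (∀ (X Y : C) (f g : X ⟶ A ⊗ Y),
      (A ◁ f) ≫ (α_ A A Y).inv ≫ (m ▷ Y) = (A ◁ g) ≫ (α_ A A Y).inv ≫ (m ▷ Y) →
      f = g)

section Aux

/-- `(1 ⊗ e) ≫ ρ ≫ e = (e ⊗ₘ e) ≫ λ`. -/
lemma counital_aux_u (A : C) (e : A ⟶ 𝟙_ C) :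
    (A ◁ e) ≫ (ρ_ A).hom ≫ e = (e ⊗ₘ e) ≫ (λ_ (𝟙_ C)).hom := by
  rw [MonoidalCategory.tensorHom_def, assoc, ← whisker_exchange_assoc]
  simp [unitors_equal]

/-- `(e ⊗ 1) ≫ λ ≫ e = (e ⊗ₘ e) ≫ λ`. -/
lemma counital_aux_v (A : C) (e : A ⟶ 𝟙_ C) :
    (e ▷ A) ≫ (λ_ A).hom ≫ e = (e ⊗ₘ e) ≫ (λ_ (𝟙_ C)).hom := by
  rw [tensorHom_def', assoc, whisker_exchange_assoc]
  simp

/-- Moving a rightmost `e` past a multiplication map, left-whiskered form. -/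
lemma counital_aux_left (A : C) (e : A ⟶ 𝟙_ C) (m : A ⊗ A ⟶ A) (f : A ⊗ A ⟶ A ⊗ A) :
    (A ◁ (f ≫ (A ◁ e))) ≫ (α_ A A (𝟙_ C)).inv ≫ (m ▷ 𝟙_ C)
      = (A ◁ f) ≫ (α_ A A A).inv ≫ (m ▷ A) ≫ (A ◁ e) := by
  rw [MonoidalCategory.whiskerLeft_comp, assoc, associator_inv_naturality_right_assoc,
    whisker_exchange]

/-- The identity version of `counital_aux_left`. -/
lemma counital_aux_left' (A : C) (e : A ⟶ 𝟙_ C) (m : A ⊗ A ⟶ A) :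
    (A ◁ (A ◁ e)) ≫ (α_ A A (𝟙_ C)).inv ≫ (m ▷ 𝟙_ C)
      = (α_ A A A).inv ≫ (m ▷ A) ≫ (A ◁ e) := by
  rw [associator_inv_naturality_right_assoc, whisker_exchange]

/-- Moving a leftmost `e` past a multiplication map, right-whiskered form. -/
lemma counital_aux_right (A : C) (e : A ⟶ 𝟙_ C) (m : A ⊗ A ⟶ A) (f : A ⊗ A ⟶ A ⊗ A) :
    ((f ≫ (e ▷ A)) ▷ A) ≫ (α_ (𝟙_ C) A A).hom ≫ ((𝟙_ C) ◁ m)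
      = (f ▷ A) ≫ (α_ A A A).hom ≫ (A ◁ m) ≫ (e ▷ A) := by
  rw [comp_whiskerRight, assoc, associator_naturality_left_assoc, ← whisker_exchange]

/-- The identity version of `counital_aux_right`. -/
lemma counital_aux_right' (A : C) (e : A ⟶ 𝟙_ C) (m : A ⊗ A ⟶ A) :
    ((e ▷ A) ▷ A) ≫ (α_ (𝟙_ C) A A).hom ≫ ((𝟙_ C) ◁ m)
      = (α_ A A A).hom ≫ (A ◁ m) ≫ (e ▷ A) := by
  rw [associator_naturality_left_assoc, ← whisker_exchange]

end Aux

/-- If `(t₂ ⊗ 1) ≫ (1 ⊗ t₁) = (1 ⊗ t₁) ≫ (t₂ ⊗ 1)`, `t₁ ≫ (e ⊗ 1) = t₂ ≫ (1 ⊗ e)`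
and the common composite `m` is non-degenerate, then the following are equivalent:
(i) `t₁ ≫ (1 ⊗ e) = 1 ⊗ e`; (ii) `t₂ ≫ (e ⊗ 1) = e ⊗ 1`;
(iii) `m ≫ e = (e ⊗ₘ e) ≫ λ_I`. -/
theorem counital_tfae (A : C) (t₁ t₂ : A ⊗ A ⟶ A ⊗ A) (e : A ⟶ 𝟙_ C)
    (hcompat : CompatEq A t₁ t₂)
    (hcounits : t₁ ≫ (e ▷ A) ≫ (λ_ A).hom = t₂ ≫ (A ◁ e) ≫ (ρ_ A).hom)
    (hnd : NonDeg A (t₁ ≫ (e ▷ A) ≫ (λ_ A).hom)) :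
    ((t₁ ≫ (A ◁ e) = A ◁ e) ↔ (t₂ ≫ (e ▷ A) = e ▷ A)) ∧
    ((t₂ ≫ (e ▷ A) = e ▷ A) ↔
      ((t₁ ≫ (e ▷ A) ≫ (λ_ A).hom) ≫ e = (e ⊗ₘ e) ≫ (λ_ (𝟙_ C)).hom)) := by
  have hnd' : (∀ (X Y : C) (f g : X ⟶ Y ⊗ A),
      (f ▷ A) ≫ (α_ Y A A).hom ≫ (Y ◁ (t₁ ≫ (e ▷ A) ≫ (λ_ A).hom))
        = (g ▷ A) ≫ (α_ Y A A).hom ≫ (Y ◁ (t₁ ≫ (e ▷ A) ≫ (λ_ A).hom)) → f = g) ∧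
    (∀ (X Y : C) (f g : X ⟶ A ⊗ Y),
      (A ◁ f) ≫ (α_ A A Y).inv ≫ ((t₁ ≫ (e ▷ A) ≫ (λ_ A).hom) ▷ Y)
        = (A ◁ g) ≫ (α_ A A Y).inv ≫ ((t₁ ≫ (e ▷ A) ≫ (λ_ A).hom) ▷ Y) → f = g) := hnd
  have hc : (t₂ ▷ A) ≫ (α_ A A A).hom ≫ (A ◁ t₁) ≫ (α_ A A A).inv =
      (α_ A A A).hom ≫ (A ◁ t₁) ≫ (α_ A A A).inv ≫ (t₂ ▷ A) := hcompat
  have compat1 : (A ◁ t₁) ≫ (α_ A A A).inv ≫ (t₂ ▷ A) ≫ (α_ A A A).hom =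
      (α_ A A A).inv ≫ (t₂ ▷ A) ≫ (α_ A A A).hom ≫ (A ◁ t₁) := by
    have h := congrArg (fun x => (α_ A A A).inv ≫ x ≫ (α_ A A A).hom) hc
    simpa using h.symm
  -- (i) → (iii)
  have h13 : (t₁ ≫ (A ◁ e) = A ◁ e) →
      (t₁ ≫ (e ▷ A) ≫ (λ_ A).hom) ≫ e = (e ⊗ₘ e) ≫ (λ_ (𝟙_ C)).hom := by
    intro h
    have hv : (e ▷ A) ≫ (λ_ A).hom ≫ e = (A ◁ e) ≫ (e ▷ 𝟙_ C) ≫ (λ_ (𝟙_ C)).hom := by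
      rw [whisker_exchange_assoc]; simp
    rw [assoc, assoc, hv, reassoc_of% h, tensorHom_def', assoc]
  -- (ii) → (iii)
  have h23 : (t₂ ≫ (e ▷ A) = e ▷ A) →
      (t₁ ≫ (e ▷ A) ≫ (λ_ A).hom) ≫ e = (e ⊗ₘ e) ≫ (λ_ (𝟙_ C)).hom := by
    intro h
    have hu : (A ◁ e) ≫ (ρ_ A).hom ≫ e = (e ▷ A) ≫ (𝟙_ C ◁ e) ≫ (λ_ (𝟙_ C)).hom := by
      rw [← whisker_exchange_assoc]; simp [unitors_equal]
    rw [hcounits, assoc, assoc, hu, reassoc_of% h, MonoidalCategory.tensorHom_def, assoc]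
  -- (iii) → (i)
  have h31 : ((t₁ ≫ (e ▷ A) ≫ (λ_ A).hom) ≫ e = (e ⊗ₘ e) ≫ (λ_ (𝟙_ C)).hom) →
      t₁ ≫ (A ◁ e) = A ◁ e := by
    intro hiii
    have key1 : t₁ ≫ ((e ▷ A) ≫ (λ_ A).hom ≫ e) = (e ▷ A) ≫ (λ_ A).hom ≫ e := by
      simpa only [assoc] using hiii.trans (counital_aux_v A e).symm
    have hmv : ((t₁ ≫ (e ▷ A) ≫ (λ_ A).hom) ▷ A) ≫ (A ◁ e)
        = (t₂ ▷ A) ≫ (α_ A A A).hom ≫ (A ◁ ((e ▷ A) ≫ (λ_ A).hom ≫ e)) := by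
      rw [hcounits]
      simp only [comp_whiskerRight, assoc]
      congr 1
      monoidal
    apply hnd'.2 (A ⊗ A) (𝟙_ C)
    rw [counital_aux_left, counital_aux_left', hmv, reassoc_of% compat1,
      ← MonoidalCategory.whiskerLeft_comp, key1]
  -- (iii) → (ii)
  have h32 : ((t₁ ≫ (e ▷ A) ≫ (λ_ A).hom) ≫ e = (e ⊗ₘ e) ≫ (λ_ (𝟙_ C)).hom) →
      t₂ ≫ (e ▷ A) = e ▷ A := by
    intro hiii
    have key2 : t₂ ≫ ((A ◁ e) ≫ (ρ_ A).hom ≫ e) = (A ◁ e) ≫ (ρ_ A).hom ≫ e := by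
      have h' : (t₂ ≫ (A ◁ e) ≫ (ρ_ A).hom) ≫ e = (e ⊗ₘ e) ≫ (λ_ (𝟙_ C)).hom := by
        rw [← hcounits]; exact hiii
      simpa only [assoc] using h'.trans (counital_aux_u A e).symm
    have hmu : (A ◁ (t₁ ≫ (e ▷ A) ≫ (λ_ A).hom)) ≫ (e ▷ A)
        = (A ◁ t₁) ≫ (α_ A A A).inv ≫ (((A ◁ e) ≫ (ρ_ A).hom ≫ e) ▷ A) := by
      simp only [MonoidalCategory.whiskerLeft_comp, assoc]
      congr 1
      monoidal
    apply hnd'.1 (A ⊗ A) (𝟙_ C)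
    rw [counital_aux_right, counital_aux_right', hmu, reassoc_of% hc,
      ← comp_whiskerRight, key2]
  exact ⟨⟨fun h => h32 (h13 h), fun h => h31 (h23 h)⟩, ⟨h23, h32⟩⟩
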